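/- arXiv:1809.07760 — 2 statements merged into one kernel-verified Lean document; each statement's English description precedes it below -/
import Mathlib

section
/- (Residue at a simple pole of the Molien–Weyl integrand.) Let t₁,…,t_r be nonzero complex numbers with |t_k| < 1 for all k, let ℓ ∈ ℤ, fix (K,I) ∈ Λ, let w be a complex a_{K,I}-th root of t_K, let ζ₀ be an a_{K,I}-th root of unity, and set τ = ζ₀·w (so τ^{a_{K,I}} = t_K). Define f(z) = z^{ℓ−1} / ( ∏_{k : d_k even} (1 − t_k) · ∏_{(k,i)∈Λ} (1 − t_k z^{−a_{k,i}})(1 − t_k z^{a_{k,i}}) ). Assume that τ^{a_{k,i}} ≠ t_k for every (k,i) ∈ Λ∖{(K,I)} and that t_k·τ^{a_{k,i}} ≠ 1 for every (k,i) ∈ Λ. Then f has a simple pole at z = τ and lim_{z→τ} (z − τ)·f(z) = τ^{ℓ} / ( a_{K,I}·(1 − t_K²) · ∏_{k : d_k even} (1 − t_k) · ∏_{(k,i)∈Λ∖{(K,I)}} (1 − t_k τ^{−a_{k,i}})(1 − t_k τ^{a_{k,i}}) ). -/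
open MvPolynomial Complex Filter Topology
open scoped TensorProduct

noncomputable section

/-- The group `SU₂`-complexified, i.e. `SL(2,ℂ)`. -/
abbrev SL2 : Type := Matrix.SpecialLinearGroup (Fin 2) ℂ

/-- Substitution action of a `2 × 2` matrix on polynomials in two variables
(binary forms): the variables are replaced by the linear forms determined by `g`. -/
def subAct (g : Matrix (Fin 2) (Fin 2) ℂ) :
    MvPolynomial (Fin 2) ℂ →ₐ[ℂ] MvPolynomial (Fin 2) ℂ :=
  aeval fun s => ∑ s' : Fin 2, g s' s • (X s' : MvPolynomial (Fin 2) ℂ)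

/-- The monomial basis `x^i y^(d-i)` of the space of binary forms of degree `d`. -/
def bmon (d : ℕ) (i : Fin (d + 1)) : MvPolynomial (Fin 2) ℂ :=
  X 0 ^ (i : ℕ) * X 1 ^ (d - (i : ℕ))

/-- Matrix coefficient of the action of `g` on `V_d` in the monomial basis. -/
def repMat (d : ℕ) (g : Matrix (Fin 2) (Fin 2) ℂ) (i j : Fin (d + 1)) : ℂ :=
  coeff (Finsupp.single 0 (i : ℕ) + Finsupp.single 1 (d - (i : ℕ))) (subAct g (bmon d j))

variable {ι : Type} [Fintype ι] [DecidableEq ι]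

/-- The index set `Θ` of all weights of `W = ⊕ₖ V_{d k}`. -/
abbrev Tht (d : ι → ℕ) : Type := (k : ι) × Fin (d k + 1)

/-- The weight `a_{k,i} = 2 i - d k`. -/
def wt (d : ι → ℕ) (p : Tht d) : ℤ := 2 * (p.2 : ℤ) - (d p.1 : ℤ)

/-- The index set `Λ` of the positive weights. -/
abbrev Lam (d : ι → ℕ) : Type := {p : Tht d // d p.1 / 2 < (p.2 : ℕ)}

/-- A positive weight, as a natural number. -/
def pw (d : ι → ℕ) (p : Lam d) : ℕ := 2 * (p.1.2 : ℕ) - d p.1.1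

/-- The action of `SL₂` on the coordinate ring `ℂ[W]`, `W = ⊕ₖ V_{d k}`:
the coordinate functions (indexed by `Θ`) transform dually to the monomial basis
vectors of `W`. -/
def coordAct (d : ι → ℕ) (g : SL2) :
    MvPolynomial (Tht d) ℂ →ₐ[ℂ] MvPolynomial (Tht d) ℂ :=
  aeval fun p => ∑ j : Fin (d p.1 + 1),
    repMat (d p.1) (g⁻¹).1 p.2 j • (X ⟨p.1, j⟩ : MvPolynomial (Tht d) ℂ)

/-- The fixed subspace of `ℂ[W] ⊗ ℂ[x,y]` under the diagonal action of `SL₂`,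
where the action on `ℂ[W]` is given by `act`. -/
def fixedSub (σ : Type) (act : SL2 → (MvPolynomial σ ℂ →ₐ[ℂ] MvPolynomial σ ℂ)) :
    Submodule ℂ (MvPolynomial σ ℂ ⊗[ℂ] MvPolynomial (Fin 2) ℂ) :=
  ⨅ g : SL2, LinearMap.eqLocus
    (TensorProduct.map (act g).toLinearMap (subAct g.1).toLinearMap) LinearMap.id

/-- The subspace `P ⊗ V_L` of `ℂ[W] ⊗ ℂ[x,y]`, where `V_L` is the space of binary forms
of degree `L`. -/
def tensorPiece {σ : Type} (P : Submodule ℂ (MvPolynomial σ ℂ)) (L : ℕ) :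
    Submodule ℂ (MvPolynomial σ ℂ ⊗[ℂ] MvPolynomial (Fin 2) ℂ) :=
  LinearMap.range (TensorProduct.map P.subtype (homogeneousSubmodule (Fin 2) ℂ L).subtype)

/-- `dim (ℂ[W]_n ⊗ V_L)^{SL₂}`. -/
def covDim {σ : Type} (act : SL2 → (MvPolynomial σ ℂ →ₐ[ℂ] MvPolynomial σ ℂ))
    (L n : ℕ) : ℕ :=
  Module.finrank ℂ ↥(tensorPiece (homogeneousSubmodule σ ℂ n) L ⊓ fixedSub σ act)

/-- The univariate Hilbert series of the module of covariants. -/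
def covHilb {σ : Type} (act : SL2 → (MvPolynomial σ ℂ →ₐ[ℂ] MvPolynomial σ ℂ))
    (L : ℕ) (t : ℝ) : ℝ :=
  ∑' n : ℕ, (covDim act L n : ℝ) * t ^ n

/-- `dim ((ℂ[V_{d 1}]_{n 1} ⊗ ⋯ ⊗ ℂ[V_{d r}]_{n r}) ⊗ V_L)^{SL₂}`, the multigraded
piece being cut out by the multidegree `n`. -/
def covDimM (d : ι → ℕ) (L : ℕ) (n : ι → ℕ) : ℕ :=
  Module.finrank ℂ ↥(tensorPiece (weightedHomogeneousSubmodule ℂ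
    (fun p : Tht d => (Pi.single p.1 1 : ι → ℕ)) n) L ⊓ fixedSub (Tht d) (coordAct d))

/-- The multivariate Hilbert series of the module of covariants. -/
def covHilbM (d : ι → ℕ) (L : ℕ) (t : ι → ℝ) : ℝ :=
  ∑' n : ι → ℕ, (covDimM d L n : ℝ) * ∏ k, t k ^ n k

/-- The Schur (Laurent) polynomial associated to a weakly decreasing integer tuple `ρ`,
evaluated at `x`, as a quotient of alternants. -/
def schur {n : ℕ} (ρ : Fin n → ℤ) (x : Fin n → ℝ) : ℝ :=
  Matrix.det (Matrix.of fun i j : Fin n => x i ^ (ρ j + ((n : ℤ) - 1 - (j : ℕ)))) /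
    Matrix.det (Matrix.of fun i j : Fin n => x i ^ ((n : ℤ) - 1 - (j : ℕ)))

/-- The staircase partition `δ = (n-1, n-2, …, 1, 0)`. -/
def deltaP (n : ℕ) : Fin n → ℤ := fun j => (n : ℤ) - 1 - (j : ℕ)

/-- The partition `ρ = (n-3, n-3, n-3, n-4, …, 1, 0)`. -/
def rhoP (n : ℕ) : Fin n → ℤ :=
  fun j => if (j : ℕ) ≤ 1 then (n : ℤ) - 3 else (n : ℤ) - 1 - (j : ℕ)

/-- The partition `ρ' = (n-3, n-4, n-4, n-4, n-5, …, 1, 0)`. -/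
def rhoP' (n : ℕ) : Fin n → ℤ :=
  fun j => if (j : ℕ) = 0 then (n : ℤ) - 3
    else if (j : ℕ) ≤ 2 then (n : ℤ) - 4 else (n : ℤ) - 1 - (j : ℕ)

/-- The tuple of positive weights, enumerated as a tuple indexed by `Fin C`. -/
def aTup (d : ι → ℕ) : Fin (Fintype.card (Lam d)) → ℝ :=
  fun j => (pw d ((Fintype.equivFin (Lam d)).symm j) : ℝ)

/-- The multiset `{d k}` recording the isomorphism class of `W = ⊕ₖ V_{d k}`. -/
def wMulti (d : ι → ℕ) : Multiset ℕ := Multiset.map d Finset.univ.val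

/-- The number of indices `k` with `d k` even. -/
def evenCount (d : ι → ℕ) : ℕ := (Finset.univ.filter fun k => Even (d k)).card

/-- `D = dim_ℂ W = r + Σₖ d k`. -/
def dimW (d : ι → ℕ) : ℕ := Fintype.card ι + ∑ k, d k

/-- The infinitesimal (Lie algebra) action of a `2 × 2` matrix on binary forms. -/
def lieAct (ξ : Matrix (Fin 2) (Fin 2) ℂ) (p : MvPolynomial (Fin 2) ℂ) :
    MvPolynomial (Fin 2) ℂ :=
  ∑ s : Fin 2, (∑ s' : Fin 2, ξ s' s • (X s' : MvPolynomial (Fin 2) ℂ)) * pderiv s p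

/-- Matrix coefficient of the infinitesimal action on `V_d` in the monomial basis. -/
def lieMat (d : ℕ) (ξ : Matrix (Fin 2) (Fin 2) ℂ) (i j : Fin (d + 1)) : ℂ :=
  coeff (Finsupp.single 0 (i : ℕ) + Finsupp.single 1 (d - (i : ℕ))) (lieAct ξ (bmon d j))

/-- The action of `SL₂` on the coordinate ring `ℂ[V ⊕ V*]`, where `V = ⊕ₖ V_{d k}`:
coordinates of type `Sum.inl` are coordinates on `V` (transforming dually to `V`) and
coordinates of type `Sum.inr` are coordinates on `V*` (transforming as `V`). -/
def ctAct (d : ι → ℕ) (g : SL2) :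
    MvPolynomial (Tht (Sum.elim d d)) ℂ →ₐ[ℂ] MvPolynomial (Tht (Sum.elim d d)) ℂ :=
  aeval fun p => match p with
    | ⟨Sum.inl k, i⟩ => ∑ j : Fin (d k + 1),
        repMat (d k) (g⁻¹).1 i j •
          (X (⟨Sum.inl k, j⟩ : Tht (Sum.elim d d)) : MvPolynomial (Tht (Sum.elim d d)) ℂ)
    | ⟨Sum.inr k, i⟩ => ∑ j : Fin (d k + 1),
        repMat (d k) g.1 j i •
          (X (⟨Sum.inr k, j⟩ : Tht (Sum.elim d d)) : MvPolynomial (Tht (Sum.elim d d)) ℂ)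

/-- The component of the complexified moment map `μ(v,φ)(ξ) = φ(ξ·v)` associated
to `ξ ∈ sl₂`, as a quadratic polynomial on `V ⊕ V*`. -/
def momC (d : ι → ℕ) (ξ : Matrix (Fin 2) (Fin 2) ℂ) :
    MvPolynomial (Tht (Sum.elim d d)) ℂ :=
  ∑ k : ι, ∑ i : Fin (d k + 1), ∑ j : Fin (d k + 1),
    lieMat (d k) ξ j i •
      ((X (⟨Sum.inl k, i⟩ : Tht (Sum.elim d d)) : MvPolynomial (Tht (Sum.elim d d)) ℂ) *
        X (⟨Sum.inr k, j⟩ : Tht (Sum.elim d d)))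

/-- The ideal `(μ)` of `ℂ[V ⊕ V*]` generated by the components of the moment map
with respect to the standard basis `E, F, H` of `sl₂`. -/
def momIdeal (d : ι → ℕ) : Ideal (MvPolynomial (Tht (Sum.elim d d)) ℂ) :=
  Ideal.span {momC d !![0,1;0,0], momC d !![0,0;1,0], momC d !![1,0;0,-1]}

/-- The subspace of `SL₂`-invariant polynomials for the action `act`. -/
def invSub (σ : Type) (act : SL2 → (MvPolynomial σ ℂ →ₐ[ℂ] MvPolynomial σ ℂ)) :
    Submodule ℂ (MvPolynomial σ ℂ) :=
  ⨅ g : SL2, LinearMap.eqLocus (act g).toLinearMap LinearMap.id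

/-- The dimension of the degree-`n` component of the invariant ring. -/
def invDim (σ : Type) (act : SL2 → (MvPolynomial σ ℂ →ₐ[ℂ] MvPolynomial σ ℂ)) (n : ℕ) : ℕ :=
  Module.finrank ℂ ↥(invSub σ act ⊓ homogeneousSubmodule σ ℂ n)

/-- The Hilbert series of the invariant ring. -/
def invHilb (σ : Type) (act : SL2 → (MvPolynomial σ ℂ →ₐ[ℂ] MvPolynomial σ ℂ)) (t : ℝ) : ℝ :=
  ∑' n : ℕ, (invDim σ act n : ℝ) * t ^ n

/-- The dimension of the degree-`n` component of the graded algebra of regular functions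
on the symplectic quotient, `ℂ[V⊕V*]^{SL₂}/((μ) ∩ ℂ[V⊕V*]^{SL₂})`: the image of the
degree-`n` invariants in `ℂ[V⊕V*]/(μ)`. -/
def onDim (d : ι → ℕ) (n : ℕ) : ℕ :=
  Module.finrank ℂ ↥(Submodule.map (Submodule.mkQ ((momIdeal d).restrictScalars ℂ))
    (invSub (Tht (Sum.elim d d)) (ctAct d) ⊓ homogeneousSubmodule (Tht (Sum.elim d d)) ℂ n))

/-- The on-shell Hilbert series `Hilb_V^{on}`. -/
def onHilb (d : ι → ℕ) (t : ℝ) : ℝ := ∑' n : ℕ, (onDim d n : ℝ) * t ^ n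


/-- **Residue at a simple pole of the Molien–Weyl integrand.**
For nonzero `t₁,…,t_r` of modulus `< 1`, `(K,I) ∈ Λ`, `w` an `a_{K,I}`-th root of
`t_K` and `ζ₀` an `a_{K,I}`-th root of unity, set `τ = ζ₀ w`. If `τ^{a_{k,i}} ≠ t_k`
for all `(k,i) ∈ Λ∖{(K,I)}` and `t_k τ^{a_{k,i}} ≠ 1` for all `(k,i) ∈ Λ`, then
`(z - τ) f(z)` converges, as `z → τ`, to the stated residue, where
`f(z) = z^{ℓ-1} / (∏_{d_k even} (1 - t_k) ∏_{(k,i)∈Λ} (1 - t_k z^{-a_{k,i}})(1 - t_k z^{a_{k,i}}))`. -/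
theorem molien_weyl_simple_pole_residue
    (r : ℕ) (d : Fin r → ℕ) (hd : ∀ k, 1 ≤ d k)
    (t : Fin r → ℂ) (ht0 : ∀ k, t k ≠ 0) (ht1 : ∀ k, ‖t k‖ < 1)
    (ℓ : ℤ) (P : Lam d) (w : ℂ) (hw : w ^ pw d P = t P.1.1)
    (ζ0 : ℂ) (hζ0 : ζ0 ^ pw d P = 1)
    (hτ1 : ∀ q : Lam d, q ≠ P → (ζ0 * w) ^ pw d q ≠ t q.1.1)
    (hτ2 : ∀ q : Lam d, t q.1.1 * (ζ0 * w) ^ pw d q ≠ 1) :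
    Tendsto (fun z : ℂ => (z - ζ0 * w) *
        (z ^ (ℓ - 1) /
          ((∏ k ∈ Finset.univ.filter fun k => Even (d k), (1 - t k)) *
            ∏ q : Lam d,
              ((1 - t q.1.1 * z ^ (-(pw d q : ℤ))) * (1 - t q.1.1 * z ^ (pw d q : ℤ))))))
      (𝓝[≠] (ζ0 * w))
      (𝓝 ((ζ0 * w) ^ ℓ /
        ((pw d P : ℂ) * (1 - t P.1.1 ^ 2) *
          (∏ k ∈ Finset.univ.filter fun k => Even (d k), (1 - t k)) *
          ∏ q ∈ Finset.univ.erase P,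
            ((1 - t q.1.1 * (ζ0 * w) ^ (-(pw d q : ℤ))) *
              (1 - t q.1.1 * (ζ0 * w) ^ (pw d q : ℤ)))))) := by
  have hP2 := P.2
  have ha : 1 ≤ pw d P := by simp only [pw]; omega
  set τ : ℂ := ζ0 * w with hτdef
  set Cc : ℂ := ∏ k ∈ Finset.univ.filter fun k => Even (d k), (1 - t k) with hCc
  have htP : t P.1.1 ≠ 0 := ht0 P.1.1
  have hw0 : w ≠ 0 := by
    intro h; apply htP; rw [← hw, h, zero_pow (by omega : pw d P ≠ 0)]
  have hζ : ζ0 ≠ 0 := by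
    intro h; rw [h, zero_pow (by omega : pw d P ≠ 0)] at hζ0
    exact one_ne_zero hζ0.symm
  have hτ0 : τ ≠ 0 := mul_ne_zero hζ hw0
  have hτa : τ ^ pw d P = t P.1.1 := by rw [hτdef, mul_pow, hζ0, hw, one_mul]
  have haC : (pw d P : ℂ) ≠ 0 := Nat.cast_ne_zero.mpr (by omega)
  have hX : (pw d P : ℂ) * τ ^ (pw d P - 1) ≠ 0 :=
    mul_ne_zero haC (pow_ne_zero _ hτ0)
  -- the contribution of the vanishing factor
  have T1 : Tendsto (fun z : ℂ => ((z ^ pw d P - t P.1.1) / (z - τ))⁻¹) (𝓝[≠] τ)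
      (𝓝 (((pw d P : ℂ) * τ ^ (pw d P - 1))⁻¹)) := by
    have hder : HasDerivAt (fun z : ℂ => z ^ pw d P)
        ((pw d P : ℂ) * τ ^ (pw d P - 1)) τ := hasDerivAt_pow (pw d P) τ
    have hs := hasDerivAt_iff_tendsto_slope.mp hder
    exact (hs.congr fun z => by rw [slope_def_field, hτa]).inv₀ hX
  -- the continuous part
  have hc1 : ∀ n : ℤ, ContinuousAt (fun z : ℂ => z ^ n) τ := fun n =>
    continuousAt_zpow₀ τ n (Or.inl hτ0)
  have hone : ∀ k, (1 : ℂ) ≠ t k := by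
    intro k h
    have := ht1 k
    rw [← h] at this
    simp at this
  have hCne : Cc ≠ 0 :=
    Finset.prod_ne_zero_iff.mpr fun k _ => sub_ne_zero.mpr (hone k)
  have hB : (1 : ℂ) - t P.1.1 * τ ^ (pw d P : ℤ) ≠ 0 := by
    have h2 := hτ2 P
    rw [hτa] at h2
    rw [zpow_natCast, hτa]
    exact sub_ne_zero.mpr h2.symm
  have hprodne : (∏ q ∈ Finset.univ.erase P,
      ((1 - t q.1.1 * τ ^ (-(pw d q : ℤ))) * (1 - t q.1.1 * τ ^ (pw d q : ℤ)))) ≠ 0 := by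
    refine Finset.prod_ne_zero_iff.mpr fun q hq => mul_ne_zero ?_ ?_
    · have hq' : q ≠ P := Finset.ne_of_mem_erase hq
      have hx : τ ^ pw d q ≠ 0 := pow_ne_zero _ hτ0
      rw [zpow_neg, zpow_natCast]
      refine sub_ne_zero.mpr fun h => hτ1 q hq' ?_
      exact ((mul_inv_eq_one₀ hx).mp h.symm).symm
    · have h2 := hτ2 q
      rw [zpow_natCast]
      exact sub_ne_zero.mpr fun h => h2 h.symm
  have T2 : Tendsto (fun z : ℂ => z ^ pw d P * z ^ (ℓ - 1) /
      (Cc * ((1 - t P.1.1 * z ^ (pw d P : ℤ)) *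
        ∏ q ∈ Finset.univ.erase P, ((1 - t q.1.1 * z ^ (-(pw d q : ℤ))) *
          (1 - t q.1.1 * z ^ (pw d q : ℤ)))))) (𝓝[≠] τ)
      (𝓝 (τ ^ pw d P * τ ^ (ℓ - 1) /
      (Cc * ((1 - t P.1.1 * τ ^ (pw d P : ℤ)) *
        ∏ q ∈ Finset.univ.erase P, ((1 - t q.1.1 * τ ^ (-(pw d q : ℤ))) *
          (1 - t q.1.1 * τ ^ (pw d q : ℤ))))))) := by
    refine Tendsto.mono_left ?_ nhdsWithin_le_nhds
    refine ContinuousAt.div (ContinuousAt.mul ((continuous_pow _).continuousAt) (hc1 _))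
      (continuousAt_const.mul (ContinuousAt.mul
        (continuousAt_const.sub (continuousAt_const.mul (hc1 _)))
        (tendsto_finset_prod _ fun q _ =>
          ContinuousAt.mul
            (continuousAt_const.sub (continuousAt_const.mul (hc1 _)))
            (continuousAt_const.sub (continuousAt_const.mul (hc1 _))))))
      (mul_ne_zero hCne (mul_ne_zero hB hprodne))
  -- value of the limit
  have hval : ((pw d P : ℂ) * τ ^ (pw d P - 1))⁻¹ * (τ ^ pw d P * τ ^ (ℓ - 1) /
      (Cc * ((1 - t P.1.1 * τ ^ (pw d P : ℤ)) *
        ∏ q ∈ Finset.univ.erase P, ((1 - t q.1.1 * τ ^ (-(pw d q : ℤ))) *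
          (1 - t q.1.1 * τ ^ (pw d q : ℤ)))))) =
      τ ^ ℓ / ((pw d P : ℂ) * (1 - t P.1.1 ^ 2) * Cc *
        ∏ q ∈ Finset.univ.erase P, ((1 - t q.1.1 * τ ^ (-(pw d q : ℤ))) *
          (1 - t q.1.1 * τ ^ (pw d q : ℤ)))) := by
    rw [zpow_natCast, hτa]
    have hτℓ : τ ^ (ℓ - 1) * τ = τ ^ ℓ := by
      rw [← zpow_add_one₀ hτ0, show ℓ - 1 + 1 = ℓ from by omega]
    have hτa' : τ ^ pw d P = τ ^ (pw d P - 1) * τ := by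
      conv_lhs => rw [← Nat.sub_add_cancel ha, pow_succ]
    have h1 : t P.1.1 * τ ^ (ℓ - 1) =
        ((pw d P : ℂ) * τ ^ (pw d P - 1)) * (τ ^ ℓ / (pw d P : ℂ)) := by
      rw [← hτa, hτa', ← hτℓ]
      field_simp
    rw [h1, mul_div_assoc, ← mul_assoc, inv_mul_cancel₀ hX, one_mul, div_div]
    congr 1
    ring
  have Tg := T1.mul T2
  rw [hval] at Tg
  refine Tg.congr' ?_
  filter_upwards [self_mem_nhdsWithin,
    (eventually_ne_nhds hτ0).filter_mono nhdsWithin_le_nhds] with z hzτ hz0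
  have hzτ' : z ≠ τ := hzτ
  rw [← Finset.mul_prod_erase Finset.univ _ (Finset.mem_univ P)]
  have hv : z ^ pw d P ≠ 0 := pow_ne_zero _ hz0
  have hz1 : (1 : ℂ) - t P.1.1 * z ^ (-(pw d P : ℤ)) =
      (z ^ pw d P - t P.1.1) * (z ^ pw d P)⁻¹ := by
    rw [zpow_neg, zpow_natCast, sub_mul, mul_inv_cancel₀ hv]
  rw [hz1]
  simp only [div_eq_mul_inv, mul_inv, inv_inv]
  ring

end
end

section
/- (Residue at zero of the Molien–Weyl integrand as a sum over weighted compositions.) Let t₁,…,t_r be nonzero complex numbers and let ν ≥ 1 be an integer. The function g(z) = ∏_{(k,i)∈Λ} 1 / ( (z^{a_{k,i}} − t_k)(1 − t_k z^{a_{k,i}}) ) is holomorphic on a neighborhood of z = 0, and the coefficient of z^{ν−1} in its Taylor expansion at 0 equals (−1)^C · Σ_{(I,J)∈S} ∏_{(k,i)∈Λ} t_k^{I_{k,i} − J_{k,i} − 1}, where S = {(I_{k,i},J_{k,i})_{(k,i)∈Λ} ∈ ℤ_{≥0}^{2C} : Σ_{(k,i)∈Λ} (I_{k,i}+J_{k,i})·a_{k,i}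 = ν − 1} is a finite set. -/
open MvPolynomial Complex Filter Topology
open scoped TensorProduct

noncomputable section

variable {ι : Type} [Fintype ι] [DecidableEq ι]

set_option maxHeartbeats 1000000 in
private lemma mwAux_pi_fin {β : Type} : ∀ (n : ℕ) (F : Fin n → β → ℂ) (s : Fin n → ℂ),
    (∀ i, Summable fun x => ‖F i x‖) → (∀ i, HasSum (F i) (s i)) →
    HasSum (fun m : Fin n → β => ∏ i, F i (m i)) (∏ i, s i) ∧
      Summable (fun m : Fin n → β => ‖∏ i, F i (m i)‖) := by
  intro n
  induction n with
  | zero =>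
    intro F s _ _
    haveI : Unique (Fin 0 → β) := ⟨⟨fun i => i.elim0⟩, fun f => funext fun i => i.elim0⟩
    have h1 : HasSum (fun m : Fin 0 → β => ∏ i, F i (m i)) (∏ i, s i) := by
      have := hasSum_single (f := fun m : Fin 0 → β => ∏ i, F i (m i)) default
        (fun b hb => absurd (Subsingleton.elim b default) hb)
      simpa using this
    exact ⟨h1, (hasSum_single (f := fun m : Fin 0 → β => ‖∏ i, F i (m i)‖) default
      (fun b hb => absurd (Subsingleton.elim b default) hb)).summable⟩
  | succ n ih =>
    intro F s hS hH
    obtain ⟨ihH, ihS⟩ := ih (fun i : Fin n => F i.succ) (fun i : Fin n => s i.succ)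
      (fun i => hS i.succ) (fun i => hH i.succ)
    have h1 := summable_mul_of_summable_norm (R := ℂ) (hS 0) ihS
    have hmul : HasSum (fun x : β × (Fin n → β) => F 0 x.1 * ∏ i : Fin n, F i.succ (x.2 i))
        (s 0 * ∏ i : Fin n, s i.succ) := by
      have h2 := (hH 0).mul ihH h1
      exact h2
    have hmulS : Summable (fun x : β × (Fin n → β) =>
        ‖F 0 x.1 * ∏ i : Fin n, F i.succ (x.2 i)‖) := by
      have h2 := Summable.mul_norm (hS 0) ihS
      exact h2
    set e := Fin.consEquiv (fun _ : Fin (n + 1) => β) with he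
    have hkey : ∀ x : β × (Fin n → β),
        (∏ i : Fin (n + 1), F i (e x i)) = F 0 x.1 * ∏ i : Fin n, F i.succ (x.2 i) := by
      intro x
      rw [Fin.prod_univ_succ]
      simp [he, Fin.consEquiv]
    constructor
    · rw [Fin.prod_univ_succ]
      refine (Equiv.hasSum_iff e).mp ?_
      have heq : ((fun m : Fin (n + 1) → β => ∏ i, F i (m i)) ∘ e) =
          fun x : β × (Fin n → β) => F 0 x.1 * ∏ i : Fin n, F i.succ (x.2 i) := funext hkey
      rw [heq]
      exact hmul
    · refine (Equiv.summable_iff e).mp ?_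
      have heq : ((fun m : Fin (n + 1) → β => ‖∏ i, F i (m i)‖) ∘ e) =
          fun x : β × (Fin n → β) => ‖F 0 x.1 * ∏ i : Fin n, F i.succ (x.2 i)‖ :=
        funext fun x => by simp only [Function.comp_apply, hkey x]
      rw [heq]
      exact hmulS

private lemma mwAux_pi {ι' β : Type} [Fintype ι'] (F : ι' → β → ℂ) (s : ι' → ℂ)
    (hS : ∀ i, Summable fun x => ‖F i x‖) (hH : ∀ i, HasSum (F i) (s i)) :
    HasSum (fun m : ι' → β => ∏ i, F i (m i)) (∏ i, s i) ∧
      Summable (fun m : ι' → β => ‖∏ i, F i (m i)‖) := by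
  classical
  set e := Fintype.equivFin ι' with he
  obtain ⟨h1, h2⟩ := mwAux_pi_fin (Fintype.card ι') (fun j => F (e.symm j))
    (fun j => s (e.symm j)) (fun j => hS _) (fun j => hH _)
  set E : (ι' → β) ≃ (Fin (Fintype.card ι') → β) := Equiv.arrowCongr e (Equiv.refl β) with hE
  have hkey : ∀ m : ι' → β, (∏ j, F (e.symm j) (E m j)) = ∏ i, F i (m i) := by
    intro m
    rw [← Equiv.prod_comp e.symm (fun i => F i (m i))]
    refine Finset.prod_congr rfl fun j _ => ?_
    simp [hE, Equiv.arrowCongr]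
  have hs : (∏ j, s (e.symm j)) = ∏ i, s i := Equiv.prod_comp e.symm s
  constructor
  · rw [← hs]
    have h3 := (Equiv.hasSum_iff E).mpr h1
    exact h3.congr_fun fun m => (hkey m).symm
  · have h3 := (Equiv.summable_iff E).mpr h2
    refine h3.congr fun m => ?_
    simp only [Function.comp_apply]
    rw [hkey m]

private theorem mwAux_main {Λ : Type} [Fintype Λ] [DecidableEq Λ] (a : Λ → ℕ)
    (ha : ∀ p, 1 ≤ a p) (T : Λ → ℂ) (hT : ∀ p, T p ≠ 0) (n : ℕ) :
    {IJ : (Λ → ℕ) × (Λ → ℕ) | ∑ p, (IJ.1 p + IJ.2 p) * a p = n}.Finite ∧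
    AnalyticAt ℂ (fun z : ℂ => ∏ p, ((z ^ a p - T p) * (1 - T p * z ^ a p))⁻¹) 0 ∧
    iteratedDeriv n (fun z : ℂ => ∏ p, ((z ^ a p - T p) * (1 - T p * z ^ a p))⁻¹) 0 =
      (Nat.factorial n : ℂ) * ((-1 : ℂ) ^ Fintype.card Λ *
        ∑' IJ : {IJ : (Λ → ℕ) × (Λ → ℕ) // ∑ p, (IJ.1 p + IJ.2 p) * a p = n},
          ∏ p, T p ^ ((IJ.1.1 p : ℤ) - (IJ.1.2 p : ℤ) - 1)) := by
  classical
  set C := Fintype.card Λ with hC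
  set g : ℂ → ℂ := fun z => ∏ p, ((z ^ a p - T p) * (1 - T p * z ^ a p))⁻¹ with hg
  -- Part 1 : finiteness
  have hfin : ∀ N : ℕ,
      {IJ : (Λ → ℕ) × (Λ → ℕ) | ∑ p, (IJ.1 p + IJ.2 p) * a p = N}.Finite := by
    intro N
    have hsub : {IJ : (Λ → ℕ) × (Λ → ℕ) | ∑ p, (IJ.1 p + IJ.2 p) * a p = N} ⊆
        (Set.pi Set.univ fun _ : Λ => Set.Iic N) ×ˢ
          (Set.pi Set.univ fun _ : Λ => Set.Iic N) := by
      rintro ⟨I, J⟩ h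
      simp only [Set.mem_setOf_eq] at h
      have hb : ∀ p, (I p + J p) * a p ≤ N := by
        intro p
        rw [← h]
        exact Finset.single_le_sum (f := fun p => (I p + J p) * a p)
          (fun _ _ => Nat.zero_le _) (Finset.mem_univ p)
      have hb1 : ∀ p, I p + J p ≤ N := fun p =>
        le_trans (Nat.le_mul_of_pos_right _ (ha p)) (hb p)
      constructor
      · intro p _
        simp only [Set.mem_Iic]
        exact le_trans (Nat.le_add_right _ _) (hb1 p)
      · intro p _
        simp only [Set.mem_Iic]
        exact le_trans (Nat.le_add_left _ _) (hb1 p)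
    exact ((Set.Finite.pi fun _ => Set.finite_Iic N).prod
      (Set.Finite.pi fun _ => Set.finite_Iic N)).subset hsub
  -- Part 2 : analyticity
  have hanal : AnalyticAt ℂ g 0 := by
    refine Finset.analyticAt_fun_prod _ (fun p _ => ?_)
    refine AnalyticAt.inv ?_ ?_
    · exact (((analyticAt_id).pow _).sub analyticAt_const).mul
        (analyticAt_const.sub (analyticAt_const.mul ((analyticAt_id).pow _)))
    · have h0 : (0 : ℂ) ^ a p = 0 := zero_pow (by have := ha p; omega)
      simp only [h0, zero_sub, mul_zero, sub_zero, mul_one]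
      simpa using hT p
  -- setup for part 3
  set c : ℕ → ℂ := fun N => (-1 : ℂ) ^ C *
      ∑' IJ : {IJ : (Λ → ℕ) × (Λ → ℕ) // ∑ p, (IJ.1 p + IJ.2 p) * a p = N},
        ∏ p, T p ^ ((IJ.1.1 p : ℤ) - (IJ.1.2 p : ℤ) - 1) with hc
  haveI hfinsub : ∀ N : ℕ,
      Finite {IJ : (Λ → ℕ) × (Λ → ℕ) // ∑ p, (IJ.1 p + IJ.2 p) * a p = N} :=
    fun N => (hfin N).to_subtype
  set B : ℝ := 1 + ∑ p, (‖T p‖ + ‖(T p)⁻¹‖) with hB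
  have hBsum : (0:ℝ) ≤ ∑ p, (‖T p‖ + ‖(T p)⁻¹‖) :=
    Finset.sum_nonneg fun p _ => by positivity
  have hB1 : (1:ℝ) ≤ B := by rw [hB]; linarith
  have hB0 : (0:ℝ) < B := by linarith
  have hBi0 : (0:ℝ) < B⁻¹ := inv_pos.mpr hB0
  have hBi1 : B⁻¹ ≤ 1 := by
    nlinarith [mul_inv_cancel₀ (ne_of_gt hB0)]
  have hTB : ∀ p, ‖T p‖ ≤ B ∧ ‖(T p)⁻¹‖ ≤ B := by
    intro p
    have h1 : ‖T p‖ + ‖(T p)⁻¹‖ ≤ ∑ q, (‖T q‖ + ‖(T q)⁻¹‖) :=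
      Finset.single_le_sum (f := fun q => ‖T q‖ + ‖(T q)⁻¹‖)
        (fun q _ => by positivity) (Finset.mem_univ p)
    have h2 := norm_nonneg (T p)
    have h3 := norm_nonneg (T p)⁻¹
    constructor <;> (rw [hB]; linarith)
  have hsmall : ∀ y : ℂ, ‖y‖ < B⁻¹ → ∀ p,
      ‖T p * y ^ a p‖ < 1 ∧ ‖(T p)⁻¹ * y ^ a p‖ < 1 := by
    intro y hy p
    have hy1 : ‖y‖ ≤ 1 := le_trans hy.le hBi1
    have hpow : ‖y ^ a p‖ ≤ ‖y‖ := by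
      rw [norm_pow]
      calc ‖y‖ ^ a p ≤ ‖y‖ ^ 1 := pow_le_pow_of_le_one (norm_nonneg y) hy1 (ha p)
        _ = ‖y‖ := pow_one _
    have hTp0 : (0:ℝ) < ‖T p‖ := norm_pos_iff.mpr (hT p)
    have hTpi0 : (0:ℝ) < ‖(T p)⁻¹‖ := norm_pos_iff.mpr (inv_ne_zero (hT p))
    have hmc := mul_inv_cancel₀ (ne_of_gt hB0)
    constructor
    · rw [norm_mul]
      have h1 := (hTB p).1
      have h2 : ‖T p‖ * ‖y ^ a p‖ ≤ ‖T p‖ * ‖y‖ :=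
        mul_le_mul_of_nonneg_left hpow hTp0.le
      have h3 : ‖T p‖ * ‖y‖ < ‖T p‖ * B⁻¹ := mul_lt_mul_of_pos_left hy hTp0
      have h4 : ‖T p‖ * B⁻¹ ≤ B * B⁻¹ := mul_le_mul_of_nonneg_right h1 hBi0.le
      linarith
    · rw [norm_mul]
      have h1 := (hTB p).2
      have h2 : ‖(T p)⁻¹‖ * ‖y ^ a p‖ ≤ ‖(T p)⁻¹‖ * ‖y‖ :=
        mul_le_mul_of_nonneg_left hpow hTpi0.le
      have h3 : ‖(T p)⁻¹‖ * ‖y‖ < ‖(T p)⁻¹‖ * B⁻¹ := mul_lt_mul_of_pos_left hy hTpi0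
      have h4 : ‖(T p)⁻¹‖ * B⁻¹ ≤ B * B⁻¹ := mul_le_mul_of_nonneg_right h1 hBi0.le
      linarith
  -- main per-point power series expansion
  have main : ∀ y : ℂ, ‖y‖ < B⁻¹ →
      HasSum (fun N : ℕ => c N * y ^ N) (g y) ∧
      ∃ Nf : ℕ → ℝ, Summable Nf ∧ ∀ N, ‖c N * y ^ N‖ ≤ Nf N := by
    intro y hy
    have h12 := hsmall y hy
    set w : (Λ → ℕ × ℕ) → ℕ := fun m => ∑ p, ((m p).1 + (m p).2) * a p with hw
    set F : Λ → ℕ × ℕ → ℂ := fun p x => (T p * y ^ a p) ^ x.1 *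
      (-(T p)⁻¹ * ((T p)⁻¹ * y ^ a p) ^ x.2) with hF
    have hu1 : ∀ p, HasSum (fun I => (T p * y ^ a p) ^ I) ((1 - T p * y ^ a p)⁻¹) :=
      fun p => hasSum_geometric_of_norm_lt_one (h12 p).1
    have hu2 : ∀ p, HasSum (fun J => -(T p)⁻¹ * ((T p)⁻¹ * y ^ a p) ^ J)
        ((y ^ a p - T p)⁻¹) := by
      intro p
      have h := (hasSum_geometric_of_norm_lt_one (h12 p).2).mul_left (-(T p)⁻¹)
      have hval : (y ^ a p - T p)⁻¹ = -(T p)⁻¹ * (1 - (T p)⁻¹ * y ^ a p)⁻¹ := by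
        have h0 : T p * (1 - (T p)⁻¹ * y ^ a p) = T p - y ^ a p := by
          rw [mul_sub, mul_one, ← mul_assoc, mul_inv_cancel₀ (hT p), one_mul]
        calc (y ^ a p - T p)⁻¹ = (-(T p - y ^ a p))⁻¹ := by rw [neg_sub]
          _ = -((T p - y ^ a p)⁻¹) := inv_neg
          _ = -((T p * (1 - (T p)⁻¹ * y ^ a p))⁻¹) := by rw [h0]
          _ = -((T p)⁻¹ * (1 - (T p)⁻¹ * y ^ a p)⁻¹) := by rw [mul_inv]
          _ = -(T p)⁻¹ * (1 - (T p)⁻¹ * y ^ a p)⁻¹ := by ring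
      rw [hval]
      exact h
    have hu1n : ∀ p, Summable (fun I => ‖(T p * y ^ a p) ^ I‖) := by
      intro p
      refine (summable_geometric_of_lt_one (norm_nonneg _) (h12 p).1).congr fun I => ?_
      rw [norm_pow]
    have hu2n : ∀ p, Summable (fun J => ‖-(T p)⁻¹ * ((T p)⁻¹ * y ^ a p) ^ J‖) := by
      intro p
      refine (((summable_geometric_of_lt_one (norm_nonneg _)
        (h12 p).2)).mul_left ‖-(T p)⁻¹‖).congr fun J => ?_
      simp [norm_mul, norm_pow]
    have hFs : ∀ p, HasSum (F p) (((y ^ a p - T p) * (1 - T p * y ^ a p))⁻¹) := by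
      intro p
      have h3 := summable_mul_of_summable_norm (R := ℂ) (hu1n p) (hu2n p)
      have h4 := (hu1 p).mul (hu2 p) h3
      rw [mul_inv, mul_comm ((y ^ a p - T p)⁻¹)]
      exact h4
    have hFn : ∀ p, Summable fun x => ‖F p x‖ := by
      intro p
      have h5 := Summable.mul_norm (hu1n p) (hu2n p)
      exact h5
    obtain ⟨hBig, hBigN⟩ := mwAux_pi F
      (fun p => ((y ^ a p - T p) * (1 - T p * y ^ a p))⁻¹) hFn hFs
    -- pointwise factor computation
    have hfac : ∀ (p : Λ) (x : ℕ × ℕ),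
        F p x = (-1 : ℂ) * T p ^ ((x.1 : ℤ) - (x.2 : ℤ) - 1) * y ^ ((x.1 + x.2) * a p) := by
      intro p x
      have hTp := hT p
      rw [hF]
      simp only [mul_pow, inv_pow, zpow_sub₀ hTp, zpow_natCast, zpow_one, pow_mul, pow_add]
      field_simp
      ring
    have hprodfac : ∀ m : Λ → ℕ × ℕ,
        (∏ p, F p (m p)) = ((-1 : ℂ) ^ C *
          ∏ p, T p ^ (((m p).1 : ℤ) - ((m p).2 : ℤ) - 1)) * y ^ w m := by
      intro m
      calc (∏ p, F p (m p))
          = ∏ p, ((-1 : ℂ) * T p ^ (((m p).1 : ℤ) - ((m p).2 : ℤ) - 1) *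
              y ^ (((m p).1 + (m p).2) * a p)) :=
            Finset.prod_congr rfl fun p _ => hfac p (m p)
        _ = ((∏ _p : Λ, (-1 : ℂ)) * ∏ p, T p ^ (((m p).1 : ℤ) - ((m p).2 : ℤ) - 1)) *
              ∏ p, y ^ (((m p).1 + (m p).2) * a p) := by
            rw [← Finset.prod_mul_distrib, ← Finset.prod_mul_distrib]
        _ = ((-1 : ℂ) ^ C * ∏ p, T p ^ (((m p).1 : ℤ) - ((m p).2 : ℤ) - 1)) * y ^ w m := by
            rw [Finset.prod_const, Finset.prod_pow_eq_pow_sum, hw]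
            simp [hC]
    -- fiber equivalences
    set eA := Equiv.arrowProdEquivProdArrow Λ (fun _ => ℕ) (fun _ => ℕ) with heA
    have heAcond : ∀ (N : ℕ) (m : Λ → ℕ × ℕ), w m = N ↔
        ∑ p, ((eA m).1 p + (eA m).2 p) * a p = N := by
      intro N m
      rw [hw]
      simp [heA, Equiv.arrowProdEquivProdArrow]
    set eFib : ∀ N : ℕ, {m : Λ → ℕ × ℕ // w m = N} ≃
        {IJ : (Λ → ℕ) × (Λ → ℕ) // ∑ p, (IJ.1 p + IJ.2 p) * a p = N} :=
      fun N => eA.subtypeEquiv (heAcond N) with heFib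
    haveI hfibfin : ∀ N : ℕ, Finite {m : Λ → ℕ × ℕ // w m = N} :=
      fun N => Finite.of_equiv _ (eFib N).symm
    -- fiberwise sums
    have hfib : ∀ N : ℕ, HasSum (fun m' : {m : Λ → ℕ × ℕ // w m = N} =>
        ∏ p, F p (m'.1 p)) (c N * y ^ N) := by
      intro N
      have hsummable : Summable (fun m' : {m : Λ → ℕ × ℕ // w m = N} =>
          ∏ p, T p ^ (((m'.1 p).1 : ℤ) - ((m'.1 p).2 : ℤ) - 1)) := Summable.of_finite
      have e1 : ∑' m' : {m : Λ → ℕ × ℕ // w m = N},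
          ∏ p, T p ^ (((m'.1 p).1 : ℤ) - ((m'.1 p).2 : ℤ) - 1)
          = ∑' IJ : {IJ : (Λ → ℕ) × (Λ → ℕ) // ∑ p, (IJ.1 p + IJ.2 p) * a p = N},
          ∏ p, T p ^ ((IJ.1.1 p : ℤ) - (IJ.1.2 p : ℤ) - 1) := by
        rw [← Equiv.tsum_eq (eFib N)
          (fun IJ => ∏ p, T p ^ ((IJ.1.1 p : ℤ) - (IJ.1.2 p : ℤ) - 1))]
        exact tsum_congr fun m' => rfl
      have hs2 := (hsummable.hasSum.mul_left ((-1 : ℂ) ^ C)).mul_right (y ^ N)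
      rw [e1] at hs2
      exact hs2.congr_fun fun m' => by rw [hprodfac m'.1, m'.2]
    -- assemble along the fibration
    have hsig := (Equiv.hasSum_iff (Equiv.sigmaFiberEquiv w)).mpr hBig
    have hmain1 : HasSum (fun N : ℕ => c N * y ^ N) (g y) := by
      refine HasSum.sigma hsig fun N => ?_
      exact hfib N
    refine ⟨hmain1, fun N => ∑' m' : {m : Λ → ℕ × ℕ // w m = N}, ‖∏ p, F p (m'.1 p)‖, ?_, ?_⟩
    · have hsigN := (Equiv.hasSum_iff (Equiv.sigmaFiberEquiv w)).mpr hBigN.hasSum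
      exact (HasSum.sigma hsigN fun N => (Summable.of_finite).hasSum).summable
    · intro N
      have h6 : c N * y ^ N = ∑' m' : {m : Λ → ℕ × ℕ // w m = N}, ∏ p, F p (m'.1 p) :=
        (hfib N).tsum_eq.symm
      rw [h6]
      exact norm_tsum_le_tsum_norm Summable.of_finite
  -- choose the radius
  set sr : ℝ := B⁻¹ / 2 with hsr
  have hsr0 : (0:ℝ) < sr := by rw [hsr]; positivity
  have hsrB : sr < B⁻¹ := by rw [hsr]; linarith
  have hsrnorm : ‖(sr : ℂ)‖ < B⁻¹ := by
    rw [Complex.norm_real, Real.norm_eq_abs, abs_of_pos hsr0]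
    exact hsrB
  obtain ⟨hys, Nf, hNf, hbound⟩ := main (sr : ℂ) hsrnorm
  have hcoef : Summable fun N => ‖c N‖ * sr ^ N := by
    refine Summable.of_nonneg_of_le (fun N => by positivity) (fun N => ?_) hNf
    have hb := hbound N
    rwa [norm_mul, norm_pow, Complex.norm_real, Real.norm_eq_abs, abs_of_pos hsr0] at hb
  set pser := FormalMultilinearSeries.ofScalars ℂ c with hpser
  set R : NNReal := Real.toNNReal sr with hR
  have hRr : (R : ℝ) = sr := Real.coe_toNNReal _ hsr0.le
  have hrad : (R : ENNReal) ≤ pser.radius := by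
    refine FormalMultilinearSeries.le_radius_of_summable pser ?_
    refine hcoef.congr fun N => ?_
    rw [hpser, FormalMultilinearSeries.ofScalars_norm, hRr]
  have hfps : HasFPowerSeriesOnBall g pser 0 (R : ENNReal) := by
    refine ⟨hrad, ?_, ?_⟩
    · simp only [ENNReal.coe_pos, hR]
      exact Real.toNNReal_pos.mpr hsr0
    · intro z hz
      rw [zero_add]
      have hz1 : (‖z‖₊ : ENNReal) < (R : ENNReal) := by
        have h := hz
        simp at h
        exact ENNReal.coe_lt_coe.mpr (by rw [← NNReal.coe_lt_coe, coe_nnnorm]; exact h)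
      have hz2 : ‖z‖ < sr := by
        rw [← hRr]
        exact_mod_cast ENNReal.coe_lt_coe.mp hz1
      have hz' : ‖z‖ < B⁻¹ := lt_trans hz2 hsrB
      refine HasSum.congr_fun (main z hz').1 fun N => ?_
      rw [hpser, FormalMultilinearSeries.ofScalars_apply_eq, smul_eq_mul]
  -- extract the Taylor coefficient
  have hder := hfps.factorial_smul (y := (1 : ℂ)) n
  refine ⟨hfin n, hanal, ?_⟩
  have hid : iteratedDeriv n g 0 = iteratedFDeriv ℂ n g 0 (fun _ => 1) :=
    iteratedDeriv_eq_iteratedFDeriv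
  rw [hid, ← hder, hpser, FormalMultilinearSeries.ofScalars_apply_eq]
  simp only [hc, one_pow, smul_eq_mul, mul_one, nsmul_eq_mul]

/-- **Residue at zero of the Molien–Weyl integrand as a sum over weighted compositions.**
For nonzero `t₁,…,t_r` and `ν ≥ 1`, the set `S` of nonnegative integer solutions of
`Σ_{(k,i)∈Λ} (I_{k,i}+J_{k,i}) a_{k,i} = ν - 1` is finite, the function
`g(z) = ∏_{(k,i)∈Λ} ((z^{a_{k,i}} - t_k)(1 - t_k z^{a_{k,i}}))⁻¹` is holomorphic near
`z = 0`, and the coefficient of `z^{ν-1}` in its Taylor expansion at `0` equals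
`(-1)^C Σ_{(I,J)∈S} ∏_{(k,i)∈Λ} t_k^{I_{k,i}-J_{k,i}-1}`. -/
theorem molien_weyl_residue_at_zero
    (r : ℕ) (d : Fin r → ℕ) (hd : ∀ k, 1 ≤ d k)
    (t : Fin r → ℂ) (ht0 : ∀ k, t k ≠ 0) (ν : ℕ) (hν : 1 ≤ ν) :
    {IJ : (Lam d → ℕ) × (Lam d → ℕ) |
        ∑ p : Lam d, (IJ.1 p + IJ.2 p) * pw d p = ν - 1}.Finite ∧
    AnalyticAt ℂ
      (fun z : ℂ => ∏ p : Lam d,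
        ((z ^ pw d p - t p.1.1) * (1 - t p.1.1 * z ^ pw d p))⁻¹) 0 ∧
    iteratedDeriv (ν - 1)
        (fun z : ℂ => ∏ p : Lam d,
          ((z ^ pw d p - t p.1.1) * (1 - t p.1.1 * z ^ pw d p))⁻¹) 0 =
      (Nat.factorial (ν - 1) : ℂ) *
        ((-1 : ℂ) ^ Fintype.card (Lam d) *
          ∑' IJ : {IJ : (Lam d → ℕ) × (Lam d → ℕ) //
              ∑ p : Lam d, (IJ.1 p + IJ.2 p) * pw d p = ν - 1},
            ∏ p : Lam d, t p.1.1 ^ ((IJ.1.1 p : ℤ) - (IJ.1.2 p : ℤ) - 1)) := by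
  have hpos : ∀ p : Lam d, 1 ≤ pw d p := by
    intro p
    have h2 : d p.1.1 / 2 < (p.1.2 : ℕ) := p.2
    have := Nat.div_add_mod (d p.1.1) 2
    unfold pw
    omega
  obtain ⟨h1, h2, h3⟩ := mwAux_main (pw d) hpos (fun p => t p.1.1) (fun p => ht0 _) (ν - 1)
  exact ⟨h1, h2, h3⟩

end
end
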